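/- For any p ≥ 1 and any complex numbers z, z', one has the integral identity |z|^{2p} z − |z'|^{2p} z' = (p+1)(∫₀¹ |Z_λ|^{2p} dλ)(z − z') + p(∫₀¹ |Z_λ|^{2(p−1)} Z_λ² dλ) · conj(z − z'), where Z_λ := λz + (1−λ)z'. -/

import Mathlib

open intervalIntegral

lemma key_abs (w : ℂ) (n : ℕ) :
    ((‖w‖ ^ (2 * n) : ℝ) : ℂ) = w ^ n * (starRingEnd ℂ w) ^ n := by
  push_cast
  rw [pow_mul, ← mul_pow]
  congr 1
  rw [Complex.mul_conj, Complex.normSq_eq_norm_sq]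
  push_cast
  ring


lemma hasDerivAt_pow_comp {f : ℝ → ℂ} {f' : ℂ} {x : ℝ} (h : HasDerivAt f f' x) (n : ℕ) :
    HasDerivAt (fun y => f y ^ n) ((n : ℂ) * f x ^ (n - 1) * f') x := by
  induction n with
  | zero => simpa using hasDerivAt_const x (1 : ℂ)
  | succ n ih =>
    have h2 : HasDerivAt (fun y => f y ^ n * f y) _ x := ih.mul h
    have hfe : (fun y => f y ^ (n + 1)) = fun y => f y ^ n * f y := by
      ext y; rw [pow_succ]
    rw [hfe]
    convert h2 using 1
    rcases Nat.eq_zero_or_pos n with h0 | h0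
    · subst h0; simp
    · have hpw : f x ^ (n - 1) * f x = f x ^ n := by
        rw [← pow_succ]; congr 1; omega
      rw [Nat.add_sub_cancel]
      push_cast
      rw [mul_right_comm _ f' (f x), mul_assoc (n : ℂ), hpw]
      ring

/-- Integral identity: for `p ≥ 1` and `z, z' ∈ ℂ`, with `Z_λ = λz + (1−λ)z'`,
`|z|^{2p} z − |z'|^{2p} z' = (p+1)(∫₀¹ |Z_λ|^{2p} dλ)(z − z')
  + p(∫₀¹ |Z_λ|^{2(p−1)} Z_λ² dλ) conj(z − z')`. -/
theorem stmt_4 (p : ℕ) (hp : 1 ≤ p) (z z' : ℂ) :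
    ((‖z‖ ^ (2 * p) : ℝ) : ℂ) * z - ((‖z'‖ ^ (2 * p) : ℝ) : ℂ) * z' =
      ((p : ℂ) + 1) *
        ((↑(∫ l in (0:ℝ)..1, ‖l • z + (1 - l) • z'‖ ^ (2 * p)) : ℂ)) * (z - z')
      + (p : ℂ) *
        (∫ l in (0:ℝ)..1,
          ((‖l • z + (1 - l) • z'‖ ^ (2 * (p - 1)) : ℝ) : ℂ) *
            (l • z + (1 - l) • z') ^ 2) *
        (starRingEnd ℂ) (z - z') := by
  set w := z - z' with hw
  have hZeq : ∀ l : ℝ, l • z + (1 - l) • z' = z' + l • w := by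
    intro l; simp [hw, smul_sub, sub_smul]; ring
  set Z : ℝ → ℂ := fun l => z' + l • w with hZ
  have hZd : ∀ l : ℝ, HasDerivAt Z w l := by
    intro l
    simpa [hZ] using ((hasDerivAt_id l).smul_const w).const_add z'
  have hZc : Continuous Z := by fun_prop
  set F : ℝ → ℂ := fun l => Z l ^ (p + 1) * (starRingEnd ℂ (Z l)) ^ p with hF
  set F' : ℝ → ℂ := fun l =>
    ((p : ℂ) + 1) * (Z l ^ p * (starRingEnd ℂ (Z l)) ^ p) * w
      + (p : ℂ) * (Z l ^ (p + 1) * (starRingEnd ℂ (Z l)) ^ (p - 1)) * (starRingEnd ℂ w)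
    with hF'
  have hder : ∀ l : ℝ, HasDerivAt F (F' l) l := by
    intro l
    have h1 : HasDerivAt (fun l => Z l ^ (p + 1)) (((p + 1 : ℕ) : ℂ) * Z l ^ p * w) l := by
      simpa using hasDerivAt_pow_comp (hZd l) (p + 1)
    have hs : HasDerivAt (fun l => starRingEnd ℂ (Z l)) (starRingEnd ℂ w) l := (hZd l).star
    have h2 : HasDerivAt (fun l => (starRingEnd ℂ (Z l)) ^ p)
        (((p : ℕ) : ℂ) * (starRingEnd ℂ (Z l)) ^ (p - 1) * (starRingEnd ℂ w)) l :=
      hasDerivAt_pow_comp hs p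
    have : HasDerivAt (fun l => Z l ^ (p + 1) * (starRingEnd ℂ (Z l)) ^ p) _ l := h1.mul h2
    convert this using 1
    simp [hF']
    ring
  have hconjc : Continuous fun l => starRingEnd ℂ (Z l) := Complex.continuous_conj.comp hZc
  have hc1 : Continuous fun l => Z l ^ p * (starRingEnd ℂ (Z l)) ^ p := by fun_prop
  have hc2 : Continuous fun l => Z l ^ (p + 1) * (starRingEnd ℂ (Z l)) ^ (p - 1) := by fun_prop
  have hcF' : Continuous F' := by
    rw [hF']; fun_prop
  have hFTC : ∫ l in (0:ℝ)..1, F' l = F 1 - F 0 :=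
    intervalIntegral.integral_eq_sub_of_hasDerivAt (fun l _ => hder l)
      (hcF'.intervalIntegrable 0 1)
  have hsplit : ∫ l in (0:ℝ)..1, F' l =
      ((p : ℂ) + 1) * (∫ l in (0:ℝ)..1, Z l ^ p * (starRingEnd ℂ (Z l)) ^ p) * w
        + (p : ℂ) * (∫ l in (0:ℝ)..1, Z l ^ (p + 1) * (starRingEnd ℂ (Z l)) ^ (p - 1))
          * (starRingEnd ℂ w) := by
    rw [hF']
    rw [intervalIntegral.integral_add]
    · rw [intervalIntegral.integral_mul_const, intervalIntegral.integral_mul_const,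
        intervalIntegral.integral_const_mul, intervalIntegral.integral_const_mul]
    · exact (by fun_prop : Continuous fun l => ((p:ℂ)+1) * (Z l ^ p * (starRingEnd ℂ (Z l)) ^ p) * w).intervalIntegrable 0 1
    · exact (by fun_prop : Continuous fun l => (p:ℂ) * (Z l ^ (p+1) * (starRingEnd ℂ (Z l)) ^ (p-1)) * (starRingEnd ℂ w)).intervalIntegrable 0 1
  have hI1 : ((↑(∫ l in (0:ℝ)..1, ‖l • z + (1 - l) • z'‖ ^ (2 * p)) : ℂ)) =
      ∫ l in (0:ℝ)..1, Z l ^ p * (starRingEnd ℂ (Z l)) ^ p := by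
    rw [← intervalIntegral.integral_ofReal]
    congr 1
    ext l
    rw [hZeq l, key_abs]
  have hI2 : (∫ l in (0:ℝ)..1,
        ((‖l • z + (1 - l) • z'‖ ^ (2 * (p - 1)) : ℝ) : ℂ) *
          (l • z + (1 - l) • z') ^ 2) =
      ∫ l in (0:ℝ)..1, Z l ^ (p + 1) * (starRingEnd ℂ (Z l)) ^ (p - 1) := by
    congr 1
    ext l
    rw [hZeq l, key_abs]
    rw [mul_right_comm, ← pow_add]
    congr 2
    omega
  have hF1 : F 1 = z ^ (p + 1) * (starRingEnd ℂ z) ^ p := by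
    simp [hF, hZ, hw]
  have hF0 : F 0 = z' ^ (p + 1) * (starRingEnd ℂ z') ^ p := by
    simp [hF, hZ]
  rw [key_abs, key_abs, hI1, hI2, ← hsplit, hFTC, hF1, hF0]
  ring
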